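/- Let τ be a Wang tile set, b : τ → Bool a labeling of tiles by bits, and cL, cR boundary colors. Define L_τ ⊆ List Bool as the set of strings s such that there exists a stripe tiling g of width |s| (with boundary colors cL, cR) with b (g (i, j)) = s.get i for all i ∈ Fin |s| and all j ∈ ℤ. Then L_τ is a computable set: its characteristic function List Bool → Bool is computable. -/

import Mathlib

/-- A Wang tile set: a finite (enumerable) set of tiles, a finite set of colors,
and the four side colors of each tile. -/
structure WangTileSet where
  Tile : Type
  Color : Type
  fintypeTile : Fintype Tile
  decEqTile : DecidableEq Tile
  encodableTile : Encodable Tile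
  fintypeColor : Fintype Color
  north : Tile → Color
  south : Tile → Color
  east : Tile → Color
  west : Tile → Color

attribute [instance] WangTileSet.fintypeTile WangTileSet.decEqTile
  WangTileSet.encodableTile WangTileSet.fintypeColor

/-- `f` is a tiling of the plane by the Wang tile set `W`. -/
def WangTileSet.IsTiling (W : WangTileSet) (f : ℤ × ℤ → W.Tile) : Prop :=
  ∀ i j : ℤ,
    W.east (f (i, j)) = W.west (f (i + 1, j)) ∧
    W.north (f (i, j)) = W.south (f (i, j + 1))

/-- The `n × n` block of `f` at position `(i, j)`. -/
def WangTileSet.block (W : WangTileSet) (f : ℤ × ℤ → W.Tile) (n : ℕ) (i j : ℤ) :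
    Fin n × Fin n → W.Tile :=
  fun p => f (i + (p.1 : ℤ), j + (p.2 : ℤ))

/-- Plain Kolmogorov complexity of a natural number: the least size of a code
evaluating to it on input `0`. -/
noncomputable def K (m : ℕ) : ℕ :=
  sInf {k | ∃ c : Nat.Partrec.Code, c.eval 0 = Part.some m ∧ Nat.size (Encodable.encode c) = k}

/-- `g` is a tiling of the bi-infinite vertical stripe of width `w` with boundary colors
`cL` on the left and `cR` on the right. -/
def WangTileSet.IsStripeTiling (W : WangTileSet) (w : ℕ) (cL cR : W.Color)
    (g : Fin w × ℤ → W.Tile) : Prop :=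
  (∀ (i : Fin w) (j : ℤ) (h : (i : ℕ) + 1 < w),
      W.east (g (i, j)) = W.west (g (⟨(i : ℕ) + 1, h⟩, j))) ∧
  (∀ (i : Fin w) (j : ℤ), W.north (g (i, j)) = W.south (g (i, j + 1))) ∧
  (∀ (j : ℤ) (h0 : 0 < w), W.west (g (⟨0, h0⟩, j)) = cL) ∧
  (∀ (j : ℤ) (h1 : w - 1 < w), W.east (g (⟨w - 1, h1⟩, j)) = cR)

namespace STproof

/-- generic boolean membership via foldr -/
def memB {α : Type*} [DecidableEq α] (a : α) (l : List α) : Bool :=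
  l.foldr (fun x r => (x == a) || r) false

theorem memB_iff {α : Type*} [DecidableEq α] (a : α) (l : List α) :
    memB a l = true ↔ a ∈ l := by
  induction l with
  | nil => simp [memB]
  | cons x l ih => simp [memB, List.foldr] at ih ⊢; rw [ih]
                   exact or_congr ⟨Eq.symm, Eq.symm⟩ Iff.rfl

theorem mem_cond_singleton {α : Type*} (c : Bool) (x a : α) :
    a ∈ (cond c [x] []) ↔ c = true ∧ a = x := by cases c <;> simp

theorem foldr_and_iff {α : Type*} (p : α → Bool) (l : List α) :
    (l.foldr (fun a acc => p a && acc) true = true) ↔ ∀ a ∈ l, p a = true := by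
  induction l with
  | nil => simp
  | cons x l ih => simp [ih]

theorem foldr_or_iff {α : Type*} (p : α → Bool) (l : List α) :
    (l.foldr (fun a acc => p a || acc) false = true) ↔ ∃ a ∈ l, p a = true := by
  induction l with
  | nil => simp
  | cons x l ih => simp [ih]

variable (W : WangTileSet) (b : W.Tile → Bool) (cL cR : W.Color)

noncomputable def tl : List W.Tile := Finset.univ.toList

theorem mem_tl (t : W.Tile) : t ∈ tl W := by simp [tl]

theorem nodup_tl : (tl W).Nodup := Finset.nodup_toList _

open Classical in
noncomputable def blist (x : Bool) : List ℕ :=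
  (List.range (tl W).length).filter fun i =>
    decide (∃ h : i < (tl W).length, b ((tl W).get ⟨i, h⟩) = x)

open Classical in
noncomputable def wlist : List ℕ :=
  (List.range (tl W).length).filter fun i =>
    decide (∃ h : i < (tl W).length, W.west ((tl W).get ⟨i, h⟩) = cL)

open Classical in
noncomputable def elist : List ℕ :=
  (List.range (tl W).length).filter fun i =>
    decide (∃ h : i < (tl W).length, W.east ((tl W).get ⟨i, h⟩) = cR)

open Classical in
noncomputable def hlist : List (ℕ × ℕ) :=
  (List.range (tl W).length).flatMap fun i =>
    ((List.range (tl W).length).filter fun j =>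
      decide (∃ (h1 : i < (tl W).length) (h2 : j < (tl W).length),
        W.east ((tl W).get ⟨i, h1⟩) = W.west ((tl W).get ⟨j, h2⟩))).map fun j => (i, j)

open Classical in
noncomputable def vlist : List (ℕ × ℕ) :=
  (List.range (tl W).length).flatMap fun i =>
    ((List.range (tl W).length).filter fun j =>
      decide (∃ (h1 : i < (tl W).length) (h2 : j < (tl W).length),
        W.north ((tl W).get ⟨i, h1⟩) = W.south ((tl W).get ⟨j, h2⟩))).map fun j => (i, j)

theorem mem_blist {x : Bool} {i : ℕ} :
    i ∈ blist W b x ↔ ∃ h : i < (tl W).length, b ((tl W).get ⟨i, h⟩) = x := by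
  simp only [blist, List.mem_filter, List.mem_range, decide_eq_true_iff]
  exact ⟨fun h => h.2, fun h => ⟨h.1, h⟩⟩

theorem mem_wlist {i : ℕ} :
    i ∈ wlist W cL ↔ ∃ h : i < (tl W).length, W.west ((tl W).get ⟨i, h⟩) = cL := by
  simp only [wlist, List.mem_filter, List.mem_range, decide_eq_true_iff]
  exact ⟨fun h => h.2, fun h => ⟨h.1, h⟩⟩

theorem mem_elist {i : ℕ} :
    i ∈ elist W cR ↔ ∃ h : i < (tl W).length, W.east ((tl W).get ⟨i, h⟩) = cR := by
  simp only [elist, List.mem_filter, List.mem_range, decide_eq_true_iff]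
  exact ⟨fun h => h.2, fun h => ⟨h.1, h⟩⟩

theorem mem_hlist {p : ℕ × ℕ} :
    p ∈ hlist W ↔ ∃ (h1 : p.1 < (tl W).length) (h2 : p.2 < (tl W).length),
      W.east ((tl W).get ⟨p.1, h1⟩) = W.west ((tl W).get ⟨p.2, h2⟩) := by
  obtain ⟨i, j⟩ := p
  simp only [hlist, List.mem_flatMap, List.mem_map, List.mem_filter, List.mem_range,
    decide_eq_true_iff]
  constructor
  · rintro ⟨i', hi', j', ⟨⟨_, h⟩, rfl, rfl⟩⟩; exact h
  · rintro ⟨h1, h2, h⟩; exact ⟨i, h1, j, ⟨h2, h1, h2, h⟩, rfl⟩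

theorem mem_vlist {p : ℕ × ℕ} :
    p ∈ vlist W ↔ ∃ (h1 : p.1 < (tl W).length) (h2 : p.2 < (tl W).length),
      W.north ((tl W).get ⟨p.1, h1⟩) = W.south ((tl W).get ⟨p.2, h2⟩) := by
  obtain ⟨i, j⟩ := p
  simp only [vlist, List.mem_flatMap, List.mem_map, List.mem_filter, List.mem_range,
    decide_eq_true_iff]
  constructor
  · rintro ⟨i', hi', j', ⟨⟨_, h⟩, rfl, rfl⟩⟩; exact h
  · rintro ⟨h1, h2, h⟩; exact ⟨i, h1, j, ⟨h2, h1, h2, h⟩, rfl⟩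


noncomputable def okB (t : ℕ) (r : List ℕ) : Bool :=
  match r with
  | [] => memB t (elist W cR)
  | u :: _ => memB (t, u) (hlist W)

noncomputable def headW (r : List ℕ) : Bool :=
  match r with
  | [] => false
  | u :: _ => memB u (wlist W cL)

noncomputable def rows0 (s : List Bool) : List (List ℕ) :=
  s.foldr (fun x rs => (blist W b x).flatMap fun t =>
    rs.flatMap fun r => cond (okB W cR t r) [t :: r] []) [[]]

noncomputable def rows (s : List Bool) : List (List ℕ) :=
  (rows0 W b cR s).flatMap fun r => cond (headW W cL r) [r] []

noncomputable def vb (r r' : List ℕ) : Bool :=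
  (List.range r.length).foldr
    (fun i acc => memB (r.getD i 0, r'.getD i 0) (vlist W) && acc) true

noncomputable def stepF (s : List Bool) (S : List (List ℕ)) : List (List ℕ) :=
  (rows W b cL cR s).flatMap fun r =>
    cond (S.foldr (fun r' acc => vb W r r' || acc) false) [r] []

noncomputable def chi (s : List Bool) : Bool :=
  (s.length == 0) ||
    !(((stepF W b cL cR s)^[(rows W b cL cR s).length + 1]
        (rows W b cL cR s)).length == 0)

/-- inductive characterization of `rows0` membership -/
def good : List Bool → List ℕ → Prop
  | [], r => r = []
  | x :: s', r => ∃ t r', r = t :: r' ∧ t ∈ blist W b x ∧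
      okB W cR t r' = true ∧ good s' r'

theorem mem_rows0 {s : List Bool} {r : List ℕ} :
    r ∈ rows0 W b cR s ↔ good W b cR s r := by
  induction s generalizing r with
  | nil => simp [rows0, good]
  | cons x s ih =>
    simp only [rows0, List.foldr_cons, List.mem_flatMap, good]
    constructor
    · rintro ⟨t, ht, r', hr', hmem⟩
      rw [mem_cond_singleton] at hmem
      exact ⟨t, r', hmem.2, ht, hmem.1, (ih).1 hr'⟩
    · rintro ⟨t, r', rfl, ht, hok, hg⟩
      exact ⟨t, ht, r', ih.2 hg, by rw [mem_cond_singleton]; exact ⟨hok, rfl⟩⟩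

theorem mem_rows {s : List Bool} {r : List ℕ} :
    r ∈ rows W b cL cR s ↔ good W b cR s r ∧ headW W cL r = true := by
  simp only [rows, List.mem_flatMap, mem_cond_singleton]
  constructor
  · rintro ⟨r', hr', hw, rfl⟩; exact ⟨(mem_rows0 W b cR).1 hr', hw⟩
  · rintro ⟨hg, hw⟩; exact ⟨r, (mem_rows0 W b cR).2 hg, hw, rfl⟩

theorem vb_iff {r r' : List ℕ} (h : r.length = r'.length) :
    vb W r r' = true ↔
      ∀ i (hi : i < r.length) (hi' : i < r'.length), (r[i], r'[i]) ∈ vlist W := by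
  rw [vb, foldr_and_iff]
  constructor
  · intro H i hi hi'
    have := H i (List.mem_range.2 hi)
    rwa [List.getD_eq_getElem _ _ hi, List.getD_eq_getElem _ _ hi', memB_iff] at this
  · intro H i hi
    rw [List.mem_range] at hi
    rw [List.getD_eq_getElem _ _ hi, List.getD_eq_getElem _ _ (h ▸ hi), memB_iff]
    exact H i hi (h ▸ hi)

theorem mem_stepF {s : List Bool} {S : List (List ℕ)} {r : List ℕ} :
    r ∈ stepF W b cL cR s S ↔
      r ∈ rows W b cL cR s ∧ ∃ r' ∈ S, vb W r r' = true := by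
  simp only [stepF, List.mem_flatMap, mem_cond_singleton]
  constructor
  · rintro ⟨r0, hr0, hc, rfl⟩
    exact ⟨hr0, (foldr_or_iff _ _).1 hc⟩
  · rintro ⟨hr, hex⟩
    exact ⟨r, hr, (foldr_or_iff _ _).2 hex, rfl⟩

theorem idx_lt (t : W.Tile) : (tl W).idxOf t < (tl W).length :=
  List.idxOf_lt_length_iff.2 (mem_tl W t)

theorem get_idx (t : W.Tile) (h : (tl W).idxOf t < (tl W).length) :
    (tl W).get ⟨(tl W).idxOf t, h⟩ = t :=
  List.idxOf_get h

theorem idx_get {i : ℕ} (h : i < (tl W).length) :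
    (tl W).idxOf ((tl W).get ⟨i, h⟩) = i := by
  simpa using List.Nodup.idxOf_getElem (nodup_tl W) i h

theorem okB_nil (t : ℕ) : okB W cR t [] = memB t (elist W cR) := rfl
theorem okB_cons (t u : ℕ) (l : List ℕ) :
    okB W cR t (u :: l) = memB (t, u) (hlist W) := rfl
theorem headW_cons (u : ℕ) (l : List ℕ) :
    headW W cL (u :: l) = memB u (wlist W cL) := rfl

theorem good_iff {s : List Bool} {r : List ℕ} :
    good W b cR s r ↔
      ∃ ρ : Fin s.length → W.Tile,
        r = List.ofFn (fun i => (tl W).idxOf (ρ i)) ∧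
        (∀ i, b (ρ i) = s.get i) ∧
        (∀ (i : Fin s.length) (h : (i : ℕ) + 1 < s.length),
          W.east (ρ i) = W.west (ρ ⟨(i : ℕ) + 1, h⟩)) ∧
        (∀ h1 : s.length - 1 < s.length, W.east (ρ ⟨s.length - 1, h1⟩) = cR) := by
  induction s generalizing r with
  | nil =>
    show r = [] ↔ _
    constructor
    · rintro rfl
      exact ⟨fun i => i.elim0, by simp, fun i => i.elim0, fun i => i.elim0,
        fun h1 => absurd h1 (by simp)⟩
    · rintro ⟨ρ, rfl, -⟩; simp
  | cons x s' ih =>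
    constructor
    · rintro ⟨t, r', rfl, htB, hok, hg⟩
      obtain ⟨ht, hbt⟩ := (mem_blist W b).1 htB
      obtain ⟨ρ', rfl, hbits', hhoriz', hright'⟩ := ih.1 hg
      refine ⟨Fin.cases ((tl W).get ⟨t, ht⟩) ρ', ?_, ?_, ?_, ?_⟩
      · rw [List.ofFn_succ]
        simp only [Fin.cases_zero, Fin.cases_succ, idx_get W ht]
      · intro i
        induction i using Fin.cases with
        | zero => simpa using hbt
        | succ j => simpa using hbits' j
      · intro i h
        induction i using Fin.cases with
        | zero =>
          cases s' with
          | nil => simp at h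
          | cons y s'' =>
            rw [List.ofFn_succ, okB_cons, memB_iff] at hok
            obtain ⟨h1, h2, he⟩ := (mem_hlist W).1 hok
            simp only [Fin.val_zero]
            have hfs : (⟨0 + 1, h⟩ : Fin ((y :: s'').length + 1)) =
                Fin.succ (⟨0, Nat.succ_pos _⟩ : Fin (y :: s'').length) := rfl
            rw [hfs]
            simp only [Fin.cases_zero, Fin.cases_succ]
            have hg2 : (tl W).get ⟨(t, (tl W).idxOf
                (ρ' ⟨0, Nat.succ_pos _⟩)).2, h2⟩ = ρ' ⟨0, Nat.succ_pos _⟩ :=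
              get_idx W _ _
            rw [← hg2]; exact he
        | succ j =>
          have hj : (j : ℕ) + 1 < s'.length := by simpa using h
          simp only [Fin.val_succ]
          have hfs : (⟨(j : ℕ) + 1 + 1, h⟩ : Fin (s'.length + 1)) =
              Fin.succ ⟨(j : ℕ) + 1, hj⟩ := rfl
          rw [hfs]
          simpa using hhoriz' j hj
      · intro h1
        simp only [List.length_cons] at h1 ⊢
        rcases Nat.eq_zero_or_pos s'.length with hn | hn
        · have hr' : List.ofFn (fun i => (tl W).idxOf (ρ' i)) = [] := by
            apply List.eq_nil_of_length_eq_zero; simpa using hn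
          rw [hr', okB_nil, memB_iff] at hok
          obtain ⟨hh, he⟩ := (mem_elist W cR).1 hok
          have hix : (⟨s'.length + 1 - 1, h1⟩ : Fin (s'.length + 1)) = ⟨0, by omega⟩ := by
            apply Fin.ext; simp [hn]
          rw [hix]
          simpa using he
        · have hlt : s'.length - 1 < s'.length := by omega
          have hix : (⟨s'.length + 1 - 1, h1⟩ : Fin (s'.length + 1)) =
              Fin.succ ⟨s'.length - 1, hlt⟩ := by
            apply Fin.ext; simp; omega
          rw [hix]
          simpa using hright' hlt
    · rintro ⟨ρ, rfl, hbits, hhoriz, hright⟩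
      have hz : (0 : ℕ) < (x :: s').length := Nat.succ_pos _
      refine ⟨(tl W).idxOf (ρ ⟨0, hz⟩),
        List.ofFn (fun i : Fin s'.length => (tl W).idxOf (ρ i.succ)), ?_, ?_, ?_, ?_⟩
      · rw [List.ofFn_succ]; rfl
      · rw [mem_blist]
        exact ⟨idx_lt W _, by rw [get_idx]; simpa using hbits ⟨0, hz⟩⟩
      · cases s' with
        | nil =>
          have : List.ofFn (fun i : Fin ([] : List Bool).length =>
              (tl W).idxOf (ρ i.succ)) = [] := by simp
          rw [this, okB_nil, memB_iff, mem_elist]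
          refine ⟨idx_lt W _, ?_⟩
          rw [get_idx]
          simpa using hright (by simp)
        | cons y s'' =>
          rw [List.ofFn_succ, okB_cons, memB_iff, mem_hlist]
          refine ⟨idx_lt W _, idx_lt W _, ?_⟩
          rw [get_idx, get_idx]
          have h1 : (0 : ℕ) + 1 < (x :: y :: s'').length := by simp
          have := hhoriz ⟨0, hz⟩ h1
          simpa using this
      · apply ih.2
        refine ⟨fun i => ρ i.succ, rfl, ?_, ?_, ?_⟩
        · intro i; simpa using hbits i.succ
        · intro i h
          have h' : ((i : ℕ) + 1) + 1 < s'.length + 1 := Nat.succ_lt_succ h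
          have := hhoriz i.succ (by simpa using h')
          have hfs : (⟨((i.succ : Fin (s'.length + 1)) : ℕ) + 1, by simpa using h'⟩ :
              Fin (s'.length + 1)) = Fin.succ ⟨(i : ℕ) + 1, h⟩ := rfl
          rwa [hfs] at this
        · intro h1
          have h1' : (x :: s').length - 1 < (x :: s').length := by simp
          have := hright h1'
          have hfs : (⟨(x :: s').length - 1, h1'⟩ : Fin (s'.length + 1)) =
              Fin.succ ⟨s'.length - 1, h1⟩ := by
            apply Fin.ext; simp; omega
          rwa [hfs] at this

theorem headW_ofFn {w : ℕ} (hw : 0 < w) (ρ : Fin w → W.Tile) :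
    headW W cL (List.ofFn fun i => (tl W).idxOf (ρ i)) = true ↔
      W.west (ρ ⟨0, hw⟩) = cL := by
  cases w with
  | zero => omega
  | succ k =>
    rw [List.ofFn_succ, headW_cons, memB_iff, mem_wlist]
    constructor
    · rintro ⟨h, he⟩
      rwa [get_idx] at he
    · intro he
      exact ⟨idx_lt W _, by rwa [get_idx]⟩

theorem mem_iter {s : List Bool} {k : ℕ} {r : List ℕ} :
    r ∈ (stepF W b cL cR s)^[k] (rows W b cL cR s) ↔
      r ∈ rows W b cL cR s ∧ ∃ v : ℕ → List ℕ, v 0 = r ∧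
        (∀ i, i ≤ k → v i ∈ rows W b cL cR s) ∧
        (∀ i, i < k → vb W (v i) (v (i + 1)) = true) := by
  induction k generalizing r with
  | zero =>
    simp only [Function.iterate_zero, id]
    constructor
    · intro hr
      exact ⟨hr, fun _ => r, rfl, fun i _ => hr, fun i hi => absurd hi (by omega)⟩
    · rintro ⟨hr, -⟩; exact hr
  | succ k ih =>
    rw [Function.iterate_succ_apply', mem_stepF]
    constructor
    · rintro ⟨hr, r', hr', hvb⟩
      obtain ⟨hr'rows, v, hv0, hvmem, hvedge⟩ := ih.1 hr'
      refine ⟨hr, fun i => Nat.rec r (fun j _ => v j) i, rfl, ?_, ?_⟩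
      · intro i hi
        cases i with
        | zero => exact hr
        | succ i => exact hvmem i (by omega)
      · intro i hi
        cases i with
        | zero => show vb W r (v 0) = true; rwa [hv0]
        | succ i => exact hvedge i (by omega)
    · rintro ⟨hr, v, hv0, hvmem, hvedge⟩
      refine ⟨hr, v 1, ih.2 ⟨hvmem 1 (by omega), fun i => v (i + 1), rfl,
        fun i hi => hvmem (i + 1) (by omega), fun i hi => hvedge (i + 1) (by omega)⟩, ?_⟩
      rw [← hv0]; exact hvedge 0 (by omega)

theorem int_mod_succ (z : ℤ) (p : ℕ) (hp : 0 < p) :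
    ((z + 1) % (p : ℤ)).toNat =
      if (z % (p : ℤ)).toNat + 1 = p then 0 else (z % (p : ℤ)).toNat + 1 := by
  have hp' : (p : ℤ) ≠ 0 := by exact_mod_cast hp.ne'
  have ht0 : 0 ≤ z % (p : ℤ) := Int.emod_nonneg z hp'
  have htp : z % (p : ℤ) < p := Int.emod_lt_of_pos z (by exact_mod_cast hp)
  have key : (z + 1) % (p : ℤ) = (z % (p : ℤ) + 1) % (p : ℤ) := by
    conv_lhs => rw [Int.add_emod]
    conv_rhs => rw [Int.add_emod]
    rw [Int.emod_emod_of_dvd z (dvd_refl _)]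
  rcases eq_or_lt_of_le (by omega : z % (p : ℤ) + 1 ≤ p) with he | hlt
  · rw [key, he, Int.emod_self]
    have : (z % (p : ℤ)).toNat + 1 = p := by omega
    simp [this]
  · rw [key, Int.emod_eq_of_lt (by omega) hlt]
    have : ¬((z % (p : ℤ)).toNat + 1 = p) := by omega
    simp [this]
    omega

theorem exists_chain_of_iter_ne {s : List Bool}
    (hne : (stepF W b cL cR s)^[(rows W b cL cR s).length + 1] (rows W b cL cR s) ≠ []) :
    ∃ f : ℤ → List ℕ, (∀ j, f j ∈ rows W b cL cR s) ∧
      ∀ j, vb W (f j) (f (j + 1)) = true := by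
  set N := (rows W b cL cR s).length with hN
  obtain ⟨r, hr⟩ := List.exists_mem_of_ne_nil _ hne
  obtain ⟨hrrows, v, hv0, hvmem, hvedge⟩ := (mem_iter W b cL cR).1 hr
  have hNpos : 0 < N := List.length_pos_of_mem hrrows
  have hcard : Fintype.card (Fin N) < Fintype.card (Fin (N + 2)) := by simp
  obtain ⟨i, j, hij, huij⟩ := Fintype.exists_ne_map_eq_of_card_lt
    (fun i : Fin (N + 2) => (⟨@List.idxOf (List ℕ) _ (v i) (rows W b cL cR s),
      List.idxOf_lt_length_iff.2 (hvmem i (by omega))⟩ : Fin N)) hcard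
  have hvij : v i = v j := by
    have := congrArg Fin.val huij
    simp only at this
    exact (List.idxOf_inj (hvmem i (by omega))).1 this
  -- wlog i < j
  obtain ⟨a, c, hac, hvac⟩ : ∃ a c : ℕ, (a < c ∧ c ≤ N + 1) ∧ v a = v c := by
    rcases lt_or_gt_of_ne (fun h => hij (Fin.ext (congrArg Fin.val h))) with h | h
    · exact ⟨i, j, ⟨h, by omega⟩, hvij⟩
    · exact ⟨j, i, ⟨h, by omega⟩, hvij.symm⟩
  set p : ℕ := c - a with hpdef
  have hp : 0 < p := by omega
  refine ⟨fun z => v (a + ((z - (a : ℤ)) % (p : ℤ)).toNat), ?_, ?_⟩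
  · intro z
    have hp' : ((z - (a : ℤ)) % (p : ℤ)).toNat < p := by
      have h1 : 0 ≤ (z - (a : ℤ)) % (p : ℤ) := Int.emod_nonneg _ (by exact_mod_cast hp.ne')
      have h2 : (z - (a : ℤ)) % (p : ℤ) < p := Int.emod_lt_of_pos _ (by exact_mod_cast hp)
      omega
    exact hvmem _ (by omega)
  · intro z
    show vb W (v (a + ((z - (a : ℤ)) % (p : ℤ)).toNat))
      (v (a + ((z + 1 - (a : ℤ)) % (p : ℤ)).toNat)) = true
    have hstep : (z + 1 - (a : ℤ)) = (z - (a : ℤ)) + 1 := by ring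
    rw [hstep, int_mod_succ _ _ hp]
    set t := ((z - (a : ℤ)) % (p : ℤ)).toNat with htdef
    have ht : t < p := by
      have h1 : 0 ≤ (z - (a : ℤ)) % (p : ℤ) := Int.emod_nonneg _ (by exact_mod_cast hp.ne')
      have h2 : (z - (a : ℤ)) % (p : ℤ) < p := Int.emod_lt_of_pos _ (by exact_mod_cast hp)
      omega
    by_cases hcase : t + 1 = p
    · rw [if_pos hcase]
      have : v (a + 0) = v (a + (t + 1)) := by
        rw [Nat.add_zero]
        have : a + (t + 1) = c := by omega
        rw [this, hvac]
      rw [this]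
      have := hvedge (a + t) (by omega)
      have harr : a + t + 1 = a + (t + 1) := by omega
      rwa [harr] at this
    · rw [if_neg hcase]
      have := hvedge (a + t) (by omega)
      have harr : a + t + 1 = a + (t + 1) := by omega
      rwa [harr] at this

theorem iter_ne_of_chain {s : List Bool} (f : ℤ → List ℕ)
    (hf : ∀ j, f j ∈ rows W b cL cR s) (he : ∀ j, vb W (f j) (f (j + 1)) = true) :
    (stepF W b cL cR s)^[(rows W b cL cR s).length + 1] (rows W b cL cR s) ≠ [] := by
  apply List.ne_nil_of_mem (a := f 0)
  refine (mem_iter W b cL cR).2 ⟨hf 0, fun i => f (i : ℤ), rfl, fun i _ => hf _, ?_⟩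
  intro i _
  have := he (i : ℤ)
  have hc : ((i + 1 : ℕ) : ℤ) = (i : ℤ) + 1 := by push_cast; ring
  rwa [← hc] at this

theorem chi_iff_chain {s : List Bool} (hs : s ≠ []) :
    chi W b cL cR s = true ↔
      ∃ f : ℤ → List ℕ, (∀ j, f j ∈ rows W b cL cR s) ∧
        ∀ j, vb W (f j) (f (j + 1)) = true := by
  have hlen : s.length ≠ 0 := by simpa using hs
  rw [chi]
  simp only [Bool.or_eq_true, beq_iff_eq, hlen, false_or, Bool.not_eq_true',
    beq_eq_false_iff_ne, ne_eq, List.length_eq_zero_iff]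
  constructor
  · intro h
    exact exists_chain_of_iter_ne W b cL cR h
  · rintro ⟨f, hf, he⟩
    exact iter_ne_of_chain W b cL cR f hf he

theorem tiling_of_chain {s : List Bool} (hs : s ≠ []) (f : ℤ → List ℕ)
    (hf : ∀ j, f j ∈ rows W b cL cR s) (he : ∀ j, vb W (f j) (f (j + 1)) = true) :
    ∃ g : Fin s.length × ℤ → W.Tile, W.IsStripeTiling s.length cL cR g ∧
      ∀ (i : Fin s.length) (j : ℤ), b (g (i, j)) = s.get i := by
  have hw : 0 < s.length := List.length_pos_iff.2 hs
  have hex : ∀ j : ℤ, ∃ ρ : Fin s.length → W.Tile,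
      f j = List.ofFn (fun i => (tl W).idxOf (ρ i)) ∧
      (∀ i, b (ρ i) = s.get i) ∧
      (∀ (i : Fin s.length) (h : (i : ℕ) + 1 < s.length),
        W.east (ρ i) = W.west (ρ ⟨(i : ℕ) + 1, h⟩)) ∧
      (∀ h1 : s.length - 1 < s.length, W.east (ρ ⟨s.length - 1, h1⟩) = cR) ∧
      W.west (ρ ⟨0, hw⟩) = cL := by
    intro j
    obtain ⟨hg, hh⟩ := (mem_rows W b cL cR).1 (hf j)
    obtain ⟨ρ, hρ, h1, h2, h3⟩ := (good_iff W b cR).1 hg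
    rw [hρ] at hh
    exact ⟨ρ, hρ, h1, h2, h3, (headW_ofFn W cL hw ρ).1 hh⟩
  choose ρ hρ using hex
  refine ⟨fun p => ρ p.2 p.1, ⟨?_, ?_, ?_, ?_⟩, ?_⟩
  · intro i j h
    exact (hρ j).2.2.1 i h
  · intro i j
    have hv := he j
    rw [(hρ j).1, (hρ (j + 1)).1] at hv
    have hlen : (List.ofFn (fun i => (tl W).idxOf (ρ j i))).length =
        (List.ofFn (fun i => (tl W).idxOf (ρ (j + 1) i))).length := by simp
    have := (vb_iff W hlen).1 hv (i : ℕ) (by simp) (by simp)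
    rw [List.getElem_ofFn, List.getElem_ofFn] at this
    obtain ⟨h1, h2, hns⟩ := (mem_vlist W).1 this
    rw [get_idx, get_idx] at hns
    simpa using hns
  · intro j h0
    exact (hρ j).2.2.2.2
  · intro j h1
    exact (hρ j).2.2.2.1 h1
  · intro i j
    exact (hρ j).2.1 i

theorem chain_of_tiling {s : List Bool} (hs : s ≠ [])
    (g : Fin s.length × ℤ → W.Tile) (hst : W.IsStripeTiling s.length cL cR g)
    (hb : ∀ (i : Fin s.length) (j : ℤ), b (g (i, j)) = s.get i) :
    ∃ f : ℤ → List ℕ, (∀ j, f j ∈ rows W b cL cR s) ∧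
      ∀ j, vb W (f j) (f (j + 1)) = true := by
  have hw : 0 < s.length := List.length_pos_iff.2 hs
  refine ⟨fun j => List.ofFn (fun i => (tl W).idxOf (g (i, j))), ?_, ?_⟩
  · intro j
    refine (mem_rows W b cL cR).2 ⟨(good_iff W b cR).2
      ⟨fun i => g (i, j), rfl, fun i => hb i j, fun i h => hst.1 i j h,
        fun h1 => hst.2.2.2 j h1⟩, ?_⟩
    exact (headW_ofFn W cL hw _).2 (hst.2.2.1 j hw)
  · intro j
    refine (vb_iff W (by simp)).2 ?_
    intro i hi hi'
    rw [List.getElem_ofFn, List.getElem_ofFn]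
    refine (mem_vlist W).2 ⟨idx_lt W _, idx_lt W _, ?_⟩
    rw [get_idx, get_idx]
    exact hst.2.1 _ j

theorem chi_correct (s : List Bool) :
    chi W b cL cR s = true ↔
      ∃ g : Fin s.length × ℤ → W.Tile, W.IsStripeTiling s.length cL cR g ∧
        ∀ (i : Fin s.length) (j : ℤ), b (g (i, j)) = s.get i := by
  rcases eq_or_ne s [] with rfl | hs
  · constructor
    · intro _
      refine ⟨fun p => p.1.elim0, ⟨fun i => i.elim0, fun i => i.elim0,
        fun j h0 => absurd h0 (by simp), fun j h1 => absurd h1 (by simp)⟩,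
        fun i => i.elim0⟩
    · intro _
      simp [chi]
  · rw [chi_iff_chain W b cL cR hs]
    constructor
    · rintro ⟨f, hf, he⟩
      exact tiling_of_chain W b cL cR hs f hf he
    · rintro ⟨g, hst, hb⟩
      exact chain_of_tiling W b cL cR hs g hst hb

open Primrec in
theorem memB_primrec {α : Type} [Primcodable α] [DecidableEq α] :
    Primrec₂ (memB : α → List α → Bool) := by
  have hh : Primrec₂ (fun (p : α × List α) (q : α × Bool) => (q.1 == p.1) || q.2) :=
    Primrec.to₂ ((dom_bool₂ (· || ·)).comp
      (Primrec.beq.comp (fst.comp snd) (fst.comp fst))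
      (snd.comp snd))
  exact Primrec.to₂ ((list_foldr Primrec.snd (const false) hh).of_eq fun p => rfl)

open Primrec in
theorem okB_primrec : Primrec₂ (okB W cR) := by
  have h : Primrec fun a : ℕ × List ℕ =>
      (List.casesOn a.2 (memB a.1 (elist W cR))
        (fun u _ => memB (a.1, u) (hlist W)) : Bool) :=
    list_casesOn Primrec.snd (memB_primrec.comp Primrec.fst (const _))
      (Primrec.to₂ (memB_primrec.comp
        (Primrec.pair (fst.comp fst) (fst.comp snd)) (const _)))
  refine Primrec.to₂ (h.of_eq (g := fun a : ℕ × List ℕ => okB W cR a.1 a.2) ?_)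
  rintro ⟨t, _ | ⟨u, l⟩⟩ <;> rfl

open Primrec in
theorem headW_primrec : Primrec (headW W cL) := by
  have h : Primrec fun r : List ℕ =>
      (List.casesOn r false (fun u _ => memB u (wlist W cL)) : Bool) :=
    list_casesOn Primrec.id (const false)
      (Primrec.to₂ (memB_primrec.comp (fst.comp snd) (const _)))
  exact h.of_eq fun r => by rcases r with _ | ⟨u, l⟩ <;> rfl

open Primrec in
theorem rows0_primrec : Primrec (rows0 W b cR) := by
  have hinner : Primrec₂ fun (p : (List Bool × (Bool × List (List ℕ))) × ℕ) (r : List ℕ) =>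
      cond (okB W cR p.2 r) [p.2 :: r] [] :=
    Primrec.to₂ (Primrec.cond ((okB_primrec W cR).comp (snd.comp fst) Primrec.snd)
      (list_cons.comp (list_cons.comp (snd.comp fst) Primrec.snd) (const []))
      (const []))
  have hstep : Primrec₂ fun (a : List Bool × (Bool × List (List ℕ))) (t : ℕ) =>
      a.2.2.flatMap fun r => cond (okB W cR t r) [t :: r] [] :=
    Primrec.to₂ (list_flatMap (snd.comp (snd.comp fst)) hinner)
  have h : Primrec₂ fun (a : List Bool) (q : Bool × List (List ℕ)) =>
      (blist W b q.1).flatMap fun t => q.2.flatMap fun r => cond (okB W cR t r) [t :: r] [] :=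
    Primrec.to₂ (list_flatMap ((dom_bool (blist W b)).comp (fst.comp snd)) hstep)
  exact (list_foldr Primrec.id (const [[]]) h).of_eq fun s => rfl

open Primrec in
theorem rows_primrec : Primrec (rows W b cL cR) :=
  list_flatMap (rows0_primrec W b cR)
    (Primrec.to₂ (Primrec.cond ((headW_primrec W cL).comp Primrec.snd)
      (list_cons.comp Primrec.snd (const [])) (const [])))

open Primrec in
theorem vb_primrec : Primrec₂ (vb W) := by
  have hh : Primrec₂ fun (p : List ℕ × List ℕ) (q : ℕ × Bool) =>
      (memB (p.1.getD q.1 0, p.2.getD q.1 0) (vlist W)) && q.2 :=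
    Primrec.to₂ ((dom_bool₂ (· && ·)).comp
      (memB_primrec.comp
        (Primrec.pair ((list_getD 0).comp (fst.comp fst) (fst.comp snd))
          ((list_getD 0).comp (snd.comp fst) (fst.comp snd)))
        (const _))
      (snd.comp snd))
  exact Primrec.to₂ ((list_foldr (list_range.comp (list_length.comp Primrec.fst))
    (const true) hh).of_eq fun p => rfl)

open Primrec in
theorem stepF_primrec : Primrec₂ (stepF W b cL cR) := by
  have hc : Primrec fun p : (List Bool × List (List ℕ)) × List ℕ =>
      p.1.2.foldr (fun r' acc => vb W p.2 r' || acc) false := by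
    have hh : Primrec₂ fun (p : (List Bool × List (List ℕ)) × List ℕ)
        (q : List ℕ × Bool) => vb W p.2 q.1 || q.2 :=
      Primrec.to₂ ((dom_bool₂ (· || ·)).comp
        ((vb_primrec W).comp (snd.comp fst) (fst.comp snd)) (snd.comp snd))
    exact (list_foldr (snd.comp Primrec.fst) (const false) hh).of_eq fun p => rfl
  exact Primrec.to₂ (list_flatMap ((rows_primrec W b cL cR).comp Primrec.fst)
    (Primrec.to₂ (Primrec.cond hc
      (list_cons.comp Primrec.snd (const [])) (const []))))

open Primrec in
theorem chi_primrec : Primrec (chi W b cL cR) := by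
  have hiter : Primrec fun s =>
      (stepF W b cL cR s)^[(rows W b cL cR s).length + 1] (rows W b cL cR s) :=
    nat_iterate (succ.comp (list_length.comp (rows_primrec W b cL cR)))
      (rows_primrec W b cL cR) (stepF_primrec W b cL cR)
  exact (dom_bool₂ (· || ·)).comp
    (Primrec.beq.comp list_length (const 0))
    (Primrec.not.comp (Primrec.beq.comp (list_length.comp hiter) (const 0)))


end STproof

/-- The language of bit strings realizable on width-`|s|` stripe tilings is computable. -/
theorem stripe_language_computable (W : WangTileSet) (b : W.Tile → Bool)
    (cL cR : W.Color) :
    ∃ χ : List Bool → Bool, Computable χ ∧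
      ∀ s : List Bool, χ s = true ↔
        ∃ g : Fin s.length × ℤ → W.Tile, W.IsStripeTiling s.length cL cR g ∧
          ∀ (i : Fin s.length) (j : ℤ), b (g (i, j)) = s.get i := ⟨STproof.chi W b cL cR, (STproof.chi_primrec W b cL cR).to_comp,
    STproof.chi_correct W b cL cR⟩
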